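/- Define s_0: C → A* by 0 ↦ c, 1 ↦ ε, 2 ↦ ε, 3 ↦ c, 4 ↦ c, 5 ↦ c, 6 ↦ ε, 7 ↦ a, 8 ↦ c, and s_1: C → A* by 0 ↦ ε, 1 ↦ a, 2 ↦ a, 3 ↦ ε, 4 ↦ ε, 5 ↦ ε, 6 ↦ a, 7 ↦ a, 8 ↦ ε. Then for every n ≥ 0 and each i ∈ {0,1}, writing x = w[n] for the last letter of w[:(n+1)], one has the equality of finite words τ_i(π(μ(w[:(n+1)]))) · s_i(x) = φ_i(τ_i(π(w[:(n+1)]))). In particular, τ_i(π(μ(w[:(n+1)]))) is a prefix of φ_i(τ_i(π(w[:(n+1)]))). -/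

import Mathlib

/-- The alphabet `A = {a, b, c}`. -/
inductive A : Type
  | a | b | c
deriving DecidableEq, Repr

/-- The substitution `φ0 : a ↦ abc, b ↦ a, c ↦ ac`. -/
def phi0 : A → List A
  | A.a => [A.a, A.b, A.c]
  | A.b => [A.a]
  | A.c => [A.a, A.c]

/-- The substitution `φ1 : a ↦ cba, b ↦ a, c ↦ ca`. -/
def phi1 : A → List A
  | A.a => [A.c, A.b, A.a]
  | A.b => [A.a]
  | A.c => [A.c, A.a]

/-- The action of a morphism (given by its values on letters) on finite words. -/
def applyMorphism {α β : Type*} (φ : α → List β) (l : List α) : List β :=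
  l.flatMap φ

/-- The prefix `u[:n]` of length `n` of an infinite word `u`. -/
def pref {α : Type*} (u : ℕ → α) (n : ℕ) : List α :=
  (List.range n).map u

/-- A finite word `l` is a prefix of the infinite word `u`. -/
def PrefixOfSeq {α : Type*} (l : List α) (u : ℕ → α) : Prop :=
  ∀ i : ℕ, ∀ h : i < l.length, l.get ⟨i, h⟩ = u i

/-- The infinite word `u` is a (one-sided) fixed point of the substitution `φ`,
i.e. `φ(u) = u`: the image of every prefix of `u` is again a prefix of `u`. -/
def IsFixedPointOf {α : Type*} (φ : α → List α) (u : ℕ → α) : Prop :=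
  ∀ n : ℕ, PrefixOfSeq (applyMorphism φ (pref u n)) u

/-- A brick over the alphabet `A`: an element of `A × A × ℤ`. -/
abbrev Brick : Type := A × A × ℤ

/-- The substitution `μ` over `C = {0, 1, …, 8}`. -/
def mu : Fin 9 → List (Fin 9)
  | 0 => [0, 1]
  | 1 => [2, 3]
  | 2 => [4, 5]
  | 3 => [4, 1]
  | 4 => [2, 3, 1]
  | 5 => [2, 6]
  | 6 => [4, 7, 8]
  | 7 => [2]
  | 8 => [6, 6]

/-- The morphism `π : C → B(A)` sending each letter of `C` to a brick. -/
def piB : Fin 9 → Brick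
  | 0 => (A.a, A.c, 0)
  | 1 => (A.b, A.a, -1)
  | 2 => (A.c, A.c, 1)
  | 3 => (A.a, A.b, 1)
  | 4 => (A.a, A.a, -1)
  | 5 => (A.c, A.c, -1)
  | 6 => (A.a, A.a, 1)
  | 7 => (A.b, A.c, -1)
  | 8 => (A.c, A.b, 0)

/-- `τ_0`: projection of a finite word of bricks onto the first components. -/
def tau0 (z : List Brick) : List A := z.map (fun b => b.1)

/-- `τ_1`: projection of a finite word of bricks onto the second components. -/
def tau1 (z : List Brick) : List A := z.map (fun b => b.2.1)

/-- The map `s_0 : C → A*`. -/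
def s0 : Fin 9 → List A
  | 0 => [A.c]
  | 1 => []
  | 2 => []
  | 3 => [A.c]
  | 4 => [A.c]
  | 5 => [A.c]
  | 6 => []
  | 7 => [A.a]
  | 8 => [A.c]

/-- The map `s_1 : C → A*`. -/
def s1 : Fin 9 → List A
  | 0 => []
  | 1 => [A.a]
  | 2 => [A.a]
  | 3 => []
  | 4 => []
  | 5 => []
  | 6 => [A.a]
  | 7 => [A.a]
  | 8 => []

/-- Auxiliary: the pair relation under which the key local identities hold. -/
def GoodP (x y : Fin 9) : Prop :=
  (tau0 ((mu y).map piB) ++ s0 y = s0 x ++ applyMorphism phi0 (tau0 [piB y])) ∧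
  (tau1 ((mu y).map piB) ++ s1 y = s1 x ++ applyMorphism phi1 (tau1 [piB y]))

instance (x y : Fin 9) : Decidable (GoodP x y) :=
  inferInstanceAs (Decidable
    ((tau0 ((mu y).map piB) ++ s0 y = s0 x ++ applyMorphism phi0 (tau0 [piB y])) ∧
     (tau1 ((mu y).map piB) ++ s1 y = s1 x ++ applyMorphism phi1 (tau1 [piB y]))))

lemma mu_ne_nil : ∀ c : Fin 9, mu c ≠ [] := by decide

lemma pref_one {α : Type*} (u : ℕ → α) : pref u 1 = [u 0] := by
  simp [pref, List.range_succ]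

lemma good_interior : ∀ c : Fin 9, List.IsChain GoodP (mu c) := by
  intro c
  fin_cases c <;>
    simp only [mu, List.isChain_cons_cons, List.isChain_singleton, List.isChain_nil, and_true] <;>
    decide

lemma good_closure : ∀ x y : Fin 9, GoodP x y →
    ∀ a ∈ (mu x).getLast?, ∀ b ∈ (mu y).head?, GoodP a b := by decide

lemma pref_length {α : Type*} (u : ℕ → α) (n : ℕ) : (pref u n).length = n := by
  simp [pref]

lemma pref_get {α : Type*} (u : ℕ → α) (n i : ℕ) (h : i < (pref u n).length) :
    (pref u n).get ⟨i, h⟩ = u i := by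
  simp [pref]

lemma pref_succ {α : Type*} (u : ℕ → α) (n : ℕ) :
    pref u (n + 1) = pref u n ++ [u n] := by
  simp [pref, List.range_succ]

lemma pref_take {α : Type*} (u : ℕ → α) (m n : ℕ) :
    (pref u n).take m = pref u (min m n) := by
  simp [pref, ← List.map_take, List.take_range]

lemma flatMap_len_ge : ∀ l : List (Fin 9), l.length ≤ (l.flatMap mu).length := by
  intro l; induction l with
  | nil => simp
  | cons c l ih =>
      have hc : 1 ≤ (mu c).length := by
        have := mu_ne_nil c
        cases h : mu c with
        | nil => exact absurd h this
        | cons a t => simp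
      simp only [List.flatMap_cons, List.length_cons, List.length_append]
      omega

lemma u_eq_pref (w : ℕ → Fin 9) (hfixw : IsFixedPointOf mu w) (m : ℕ) :
    applyMorphism mu (pref w m) = pref w ((applyMorphism mu (pref w m)).length) := by
  apply List.ext_get
  · rw [pref_length]
  · intro i h1 h2
    rw [pref_get]
    exact hfixw m i h1

lemma u_len (w : ℕ → Fin 9) (hw0 : w 0 = 0) (m : ℕ) (hm : 1 ≤ m) :
    m + 1 ≤ (applyMorphism mu (pref w m)).length := by
  have htake : (pref w m).take 1 = pref w 1 := by
    rw [pref_take]; congr 1; omega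
  have hdecomp : pref w m = pref w 1 ++ (pref w m).drop 1 := by
    rw [← htake, List.take_append_drop]
  have hlen : ((pref w m).drop 1).length = m - 1 := by
    simp [pref_length]
  rw [show applyMorphism mu (pref w m) = (pref w m).flatMap mu from rfl, hdecomp,
    List.flatMap_append]
  have h1 : (pref w 1).flatMap mu = [0, 1] := by
    simp [pref, List.range_succ, hw0]; rfl
  rw [h1]
  have := flatMap_len_ge ((pref w m).drop 1)
  simp only [List.length_append]
  rw [hlen] at this
  simp only [List.length_cons, List.length_nil]
  omega

lemma chain_pref (w : ℕ → Fin 9) (hw0 : w 0 = 0) (hfixw : IsFixedPointOf mu w) :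
    ∀ m : ℕ, List.IsChain GoodP (pref w m) := by
  intro m
  induction m with
  | zero => simp [pref]
  | succ m ih =>
      rcases Nat.eq_zero_or_pos m with hm | hm
      · subst hm; rw [pref_one]; exact List.isChain_singleton _
      · -- chain on the mu-image of pref w m
        have hchain_u : List.IsChain GoodP (applyMorphism mu (pref w m)) := by
          rw [show applyMorphism mu (pref w m) = (pref w m).flatMap mu from rfl,
            List.flatMap_def]
          rw [List.isChain_flatten (by
            intro hmem
            rcases List.mem_map.1 hmem with ⟨c, _, hc⟩
            exact mu_ne_nil c hc)]
          constructor
          · intro l hl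
            rcases List.mem_map.1 hl with ⟨c, _, hc⟩
            exact hc ▸ good_interior c
          · rw [List.isChain_map]
            exact ih.imp (fun {a b} hab => good_closure a b hab)
        have hlen := u_len w hw0 m hm
        have := hchain_u.take (m + 1)
        rw [u_eq_pref w hfixw m, pref_take] at this
        rwa [min_eq_left hlen] at this

lemma good_pairs (w : ℕ → Fin 9) (hw0 : w 0 = 0) (hfixw : IsFixedPointOf mu w) (n : ℕ) :
    GoodP (w n) (w (n + 1)) := by
  have h := chain_pref w hw0 hfixw (n + 2)
  rw [List.isChain_iff_getElem] at h
  have hn : n + 1 < (pref w (n + 2)).length := by rw [pref_length]; omega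
  have := h n hn
  simpa [pref] using this

lemma step_aux {φ : A → List A} {s : Fin 9 → List A} {tau : List Brick → List A}
    (htau : ∀ a b : List Brick, tau (a ++ b) = tau a ++ tau b)
    {x y : Fin 9} {p : List (Fin 9)}
    (hg : tau ((mu y).map piB) ++ s y = s x ++ applyMorphism φ (tau [piB y]))
    (IH : tau ((applyMorphism mu p).map piB) ++ s x = applyMorphism φ (tau (p.map piB))) :
    tau ((applyMorphism mu (p ++ [y])).map piB) ++ s y =
      applyMorphism φ (tau ((p ++ [y]).map piB)) := by
  have h1 : applyMorphism mu (p ++ [y]) = applyMorphism mu p ++ mu y := by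
    simp [applyMorphism]
  have h2 : applyMorphism φ (tau ((p ++ [y]).map piB)) =
      applyMorphism φ (tau (p.map piB)) ++ applyMorphism φ (tau [piB y]) := by
    rw [List.map_append, htau]
    simp [applyMorphism]
  rw [h1, List.map_append, htau, List.append_assoc, hg, h2, ← IH, List.append_assoc]

/-- For every `n ≥ 0` and each `i ∈ {0,1}`, with `x = w[n]` the last letter of
`w[:(n+1)]`, we have `τ_i(π(μ(w[:(n+1)]))) · s_i(x) = φ_i(τ_i(π(w[:(n+1)])))`;
in particular `τ_i(π(μ(w[:(n+1)])))` is a prefix of `φ_i(τ_i(π(w[:(n+1)])))`. -/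
theorem tau_pi_mu_prefix
    (w : ℕ → Fin 9)
    (hw0 : w 0 = 0) (hfixw : IsFixedPointOf mu w) :
    ∀ n : ℕ,
      (tau0 ((applyMorphism mu (pref w (n + 1))).map piB) ++ s0 (w n) =
          applyMorphism phi0 (tau0 ((pref w (n + 1)).map piB)) ∧
        tau0 ((applyMorphism mu (pref w (n + 1))).map piB) <+:
          applyMorphism phi0 (tau0 ((pref w (n + 1)).map piB))) ∧
      (tau1 ((applyMorphism mu (pref w (n + 1))).map piB) ++ s1 (w n) =
          applyMorphism phi1 (tau1 ((pref w (n + 1)).map piB)) ∧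
        tau1 ((applyMorphism mu (pref w (n + 1))).map piB) <+:
          applyMorphism phi1 (tau1 ((pref w (n + 1)).map piB))) := by
  intro n
  induction n with
  | zero =>
      have hp : pref w 1 = [(0 : Fin 9)] := by rw [pref_one, hw0]
      rw [hp, hw0]
      exact ⟨⟨by decide, ⟨s0 0, by decide⟩⟩, ⟨by decide, ⟨s1 0, by decide⟩⟩⟩
  | succ n ih =>
      obtain ⟨⟨e0, _⟩, ⟨e1, _⟩⟩ := ih
      obtain ⟨g0, g1⟩ := good_pairs w hw0 hfixw n
      rw [pref_succ w (n + 1)]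
      have E0 := step_aux (tau := tau0) (fun a b => by simp [tau0]) g0 e0
      have E1 := step_aux (tau := tau1) (fun a b => by simp [tau1]) g1 e1
      exact ⟨⟨E0, ⟨_, E0⟩⟩, ⟨E1, ⟨_, E1⟩⟩⟩
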